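/- Let f : X → Y be a continuous length-connected map and γ a curve in X. If f ∘ γ has finite length in Y, then π̂_f ∘ γ is a continuous curve of finite length in ⟨X⟩_f and ℓ_Y(f ∘ γ) = ℓ_{⟨X⟩_f}(π̂_f ∘ γ). Conversely, if π̂_f ∘ γ is a curve of finite length in ⟨X⟩_f, then f ∘ γ has finite length and the same equality of lengths holds. -/

import Mathlib

open Set Metric ENNReal unitInterval

noncomputable section

/-- The length of a curve parametrized by the unit interval, as total variation. -/
def curveELength {Y : Type*} [PseudoEMetricSpace Y] (c : unitInterval → Y) : ℝ≥0∞ :=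
  eVariationOn c Set.univ

/-- The length pseudodistance induced by a map `f : X → Y`: the infimum of the lengths of
`f ∘ γ` over all curves `γ` joining the two points (`⊤` if there is no such curve). -/
def lengthPd {X Y : Type*} [TopologicalSpace X] [PseudoEMetricSpace Y]
    (f : X → Y) (x z : X) : ℝ≥0∞ :=
  ⨅ γ : Path x z, curveELength (fun t => f (γ t))

/-- `f` is length-connected: the induced length pseudodistance is everywhere finite. -/
def LengthConnected {X Y : Type*} [TopologicalSpace X] [PseudoEMetricSpace Y]
    (f : X → Y) : Prop :=
  ∀ x z : X, lengthPd f x z ≠ ⊤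

/-- The connecting pseudodistance induced by `f`: infimum of `diam (f '' C)` over connected
sets `C` containing both points. -/
def connPd {X Y : Type*} [TopologicalSpace X] [PseudoEMetricSpace Y]
    (f : X → Y) (x z : X) : ℝ≥0∞ :=
  ⨅ C : {C : Set X // IsConnected C ∧ x ∈ C ∧ z ∈ C}, EMetric.diam (f '' (C : Set X))

/-- `g` does not increase the length of any curve, compared with `f`. -/
def IsShorter {X Y : Type*} [TopologicalSpace X] [PseudoEMetricSpace Y]
    (f g : X → Y) : Prop :=
  ∀ c : C(unitInterval, X), curveELength (fun t => g (c t)) ≤ curveELength (fun t => f (c t))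

/-- `f` is length-minimizing relative to `Z`: any continuous competitor agreeing with `f`
on `Z` and not increasing the length of any curve in fact preserves all curve lengths. -/
def LengthMinimizing {X Y : Type*} [TopologicalSpace X] [PseudoEMetricSpace Y]
    (f : X → Y) (Z : Set X) : Prop :=
  Continuous f ∧ ∀ g : X → Y, Continuous g → Set.EqOn f g Z → IsShorter f g →
    ∀ c : C(unitInterval, X), curveELength (fun t => g (c t)) = curveELength (fun t => f (c t))

/-- `γ : ℝ → Y` is a unit-speed geodesic from `x` to `y` (on `[0, dist x y]`). -/
def IsGeodesicParam {Y : Type*} [MetricSpace Y] (γ : ℝ → Y) (x y : Y) : Prop :=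
  γ 0 = x ∧ γ (dist x y) = y ∧
    ∀ s ∈ Set.Icc (0:ℝ) (dist x y), ∀ t ∈ Set.Icc (0:ℝ) (dist x y),
      dist (γ s) (γ t) = |s - t|

/-- A geodesic metric space: any two points are joined by a geodesic. -/
def IsGeodesicSpace (Y : Type*) [MetricSpace Y] : Prop :=
  ∀ x y : Y, ∃ γ : ℝ → Y, IsGeodesicParam γ x y

/-- The diameter `R_κ` of the model surface `M_κ`: `π/√κ` for `κ > 0`, `∞` otherwise. -/
def modelDiam (κ : ℝ) : ℝ≥0∞ :=
  if κ ≤ 0 then ⊤ else ENNReal.ofReal (Real.pi / Real.sqrt κ)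

/-- Cosine of the angle opposite the side of length `c` in a triangle of side lengths
`a`, `b`, `c` in the model plane of curvature `κ` (law of cosines). -/
def modelCosAngle (κ a b c : ℝ) : ℝ :=
  if κ = 0 then (a ^ 2 + b ^ 2 - c ^ 2) / (2 * a * b)
  else if 0 < κ then
    (Real.cos (Real.sqrt κ * c) - Real.cos (Real.sqrt κ * a) * Real.cos (Real.sqrt κ * b)) /
      (Real.sin (Real.sqrt κ * a) * Real.sin (Real.sqrt κ * b))
  else
    (Real.cosh (Real.sqrt (-κ) * a) * Real.cosh (Real.sqrt (-κ) * b) -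
        Real.cosh (Real.sqrt (-κ) * c)) /
      (Real.sinh (Real.sqrt (-κ) * a) * Real.sinh (Real.sqrt (-κ) * b))

/-- Distance in the model plane of curvature `κ` between the endpoints of two segments of
lengths `a` and `b` emanating from a common vertex at an angle with cosine `cosθ`. -/
def modelSideLength (κ a b cosθ : ℝ) : ℝ :=
  if κ = 0 then Real.sqrt (a ^ 2 + b ^ 2 - 2 * a * b * cosθ)
  else if 0 < κ then
    Real.arccos (Real.cos (Real.sqrt κ * a) * Real.cos (Real.sqrt κ * b) +
      Real.sin (Real.sqrt κ * a) * Real.sin (Real.sqrt κ * b) * cosθ) / Real.sqrt κ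
  else
    -- `Real.log (x + √(x² - 1))` is the inverse hyperbolic cosine `arcosh x`
    Real.log ((Real.cosh (Real.sqrt (-κ) * a) * Real.cosh (Real.sqrt (-κ) * b) -
        Real.sinh (Real.sqrt (-κ) * a) * Real.sinh (Real.sqrt (-κ) * b) * cosθ) +
      Real.sqrt ((Real.cosh (Real.sqrt (-κ) * a) * Real.cosh (Real.sqrt (-κ) * b) -
        Real.sinh (Real.sqrt (-κ) * a) * Real.sinh (Real.sqrt (-κ) * b) * cosθ) ^ 2 - 1)) /
      Real.sqrt (-κ)

/-- `Y` is a CAT(κ) space: complete, geodesic, and every geodesic triangle of perimeter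
`< 2 R_κ` satisfies the point-side comparison with its model triangle in `M_κ`. -/
def IsCATSpace (κ : ℝ) (Y : Type*) [MetricSpace Y] : Prop :=
  CompleteSpace Y ∧ IsGeodesicSpace Y ∧
    ∀ p q r : Y, ∀ γ : ℝ → Y, IsGeodesicParam γ p q →
      ENNReal.ofReal (dist p q + dist q r + dist r p) < 2 * modelDiam κ →
      ∀ s ∈ Set.Icc (0:ℝ) (dist p q),
        dist (γ s) r ≤
          modelSideLength κ s (dist p r) (modelCosAngle κ (dist p q) (dist p r) (dist q r))

/-- A set is geodesically convex if every geodesic between its points stays inside it. -/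
def IsGeodesicallyConvex {Y : Type*} [MetricSpace Y] (K : Set Y) : Prop :=
  ∀ x ∈ K, ∀ y ∈ K, ∀ γ : ℝ → Y, IsGeodesicParam γ x y →
    ∀ t ∈ Set.Icc (0:ℝ) (dist x y), γ t ∈ K

/-- A finite graph (connected finite one-dimensional CW complex) structure on a
topological space `Γ`: finitely many edges, injective away from endpoints, with
endpoints in a finite vertex set, covering `Γ`. -/
structure FiniteGraphStruct (Γ : Type*) [TopologicalSpace Γ] where
  n : ℕ
  edge : Fin n → C(unitInterval, Γ)
  vertices : Set Γ
  vertices_finite : vertices.Finite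
  endpoints_mem : ∀ i, edge i 0 ∈ vertices ∧ edge i 1 ∈ vertices
  inj_on : ∀ i, Set.InjOn (edge i) {t : unitInterval | t ≠ 0 ∧ t ≠ 1}
  cover : ∀ x : Γ, x ∈ vertices ∨ ∃ i t, edge i t = x

end


namespace LPPAux

open Set

variable {X Y W : Type*} [TopologicalSpace X] [MetricSpace Y] [MetricSpace W]

/-- Clamp of the unit interval onto `[s, t]`. -/
def clampI (s t : unitInterval) : unitInterval → unitInterval :=
  fun u => ⟨min (max u.1 s.1) t.1,
    ⟨le_min (le_max_of_le_right s.2.1) t.2.1, min_le_of_right_le t.2.2⟩⟩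

lemma clampI_continuous (s t : unitInterval) : Continuous (clampI s t) := by
  apply Continuous.subtype_mk
  exact (continuous_subtype_val.max continuous_const).min continuous_const

lemma clampI_monotone (s t : unitInterval) : Monotone (clampI s t) := by
  intro a b hab
  exact Subtype.mk_le_mk.2 (min_le_min (max_le_max (Subtype.coe_le_coe.2 hab) le_rfl) le_rfl)

lemma clampI_image (s t : unitInterval) (hst : s ≤ t) :
    clampI s t '' Set.univ = Set.Icc s t := by
  apply Set.eq_of_subset_of_subset
  · rintro _ ⟨u, -, rfl⟩
    refine ⟨Subtype.mk_le_mk.2 ?_, Subtype.mk_le_mk.2 ?_⟩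
    · exact le_min (le_max_right _ _) hst
    · exact min_le_right _ _
  · rintro x ⟨hsx, hxt⟩
    refine ⟨x, Set.mem_univ _, ?_⟩
    apply Subtype.ext
    show min (max x.1 s.1) t.1 = x.1
    rw [max_eq_left (Subtype.coe_le_coe.2 hsx), min_eq_left (Subtype.coe_le_coe.2 hxt)]

lemma edist_pi_le (f : X → Y) (π : X → W)
    (hπ : ∀ x z : X, edist (π x) (π z) = lengthPd f x z)
    (γ : C(unitInterval, X)) {s t : unitInterval} (hst : s ≤ t) :
    edist (π (γ s)) (π (γ t)) ≤ eVariationOn (fun u => f (γ u)) (Set.Icc s t) := by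
  rw [hπ]
  have hst' : (s : ℝ) ≤ t := Subtype.coe_le_coe.2 hst
  let p : Path (γ s) (γ t) :=
    { toFun := fun u => γ (clampI s t u)
      continuous_toFun := γ.continuous.comp (clampI_continuous s t)
      source' := by
        show γ (clampI s t 0) = γ s
        congr 1
        apply Subtype.ext
        show min (max ((0 : unitInterval) : ℝ) s.1) t.1 = s.1
        rw [Set.Icc.coe_zero, max_eq_right s.2.1, min_eq_left hst']
      target' := by
        show γ (clampI s t 1) = γ t
        congr 1
        apply Subtype.ext
        show min (max ((1 : unitInterval) : ℝ) s.1) t.1 = t.1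
        rw [Set.Icc.coe_one, max_eq_left s.2.2, min_eq_right t.2.2] }
  refine le_trans (iInf_le _ p) (le_of_eq ?_)
  show eVariationOn ((fun u => f (γ u)) ∘ clampI s t) Set.univ = _
  rw [eVariationOn.comp_eq_of_monotoneOn _ _ ((clampI_monotone s t).monotoneOn _),
    clampI_image s t hst]

lemma edist_f_le (f : X → Y) (π : X → W)
    (hπ : ∀ x z : X, edist (π x) (π z) = lengthPd f x z) (x z : X) :
    edist (f x) (f z) ≤ edist (π x) (π z) := by
  rw [hπ]
  refine le_iInf fun p => ?_
  have h0 : f (p 0) = f x := by rw [p.source]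
  have h1 : f (p 1) = f z := by rw [p.target]
  calc edist (f x) (f z) = edist ((fun u => f (p u)) 0) ((fun u => f (p u)) 1) := by
        simp only [h0, h1]
    _ ≤ eVariationOn (fun u => f (p u)) Set.univ :=
        eVariationOn.edist_le _ (Set.mem_univ _) (Set.mem_univ _)

lemma chain (F : unitInterval → Y) (u : ℕ → unitInterval) (hu : Monotone u) :
    ∀ n, ∑ i ∈ Finset.range n, eVariationOn F (Set.Icc (u i) (u (i + 1)))
      ≤ eVariationOn F (Set.Icc (u 0) (u n))
  | 0 => by simp
  | (n + 1) => by
      rw [Finset.sum_range_succ]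
      have h := eVariationOn.Icc_add_Icc F (s := Set.univ) (hu (Nat.zero_le n))
        (hu (Nat.le_succ n)) (Set.mem_univ (u n))
      simp only [Set.univ_inter] at h
      calc (∑ i ∈ Finset.range n, eVariationOn F (Set.Icc (u i) (u (i + 1))))
            + eVariationOn F (Set.Icc (u n) (u (n + 1)))
          ≤ eVariationOn F (Set.Icc (u 0) (u n))
            + eVariationOn F (Set.Icc (u n) (u (n + 1))) :=
            add_le_add_left (chain F u hu n) _
        _ = eVariationOn F (Set.Icc (u 0) (u (n + 1))) := h

lemma lengths_eq (f : X → Y) (π : X → W)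
    (hπ : ∀ x z : X, edist (π x) (π z) = lengthPd f x z) (γ : C(unitInterval, X)) :
    curveELength (fun t => f (γ t)) = curveELength (fun t => π (γ t)) := by
  apply le_antisymm
  · refine iSup_le ?_
    rintro ⟨n, u, hu, -⟩
    refine le_trans (Finset.sum_le_sum fun i _ => edist_f_le f π hπ (γ (u (i + 1))) (γ (u i)))
      (eVariationOn.sum_le (n := n) hu fun i => Set.mem_univ _)
  · refine iSup_le ?_
    rintro ⟨n, u, hu, -⟩
    calc ∑ i ∈ Finset.range n, edist (π (γ (u (i + 1)))) (π (γ (u i)))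
        ≤ ∑ i ∈ Finset.range n, eVariationOn (fun v => f (γ v)) (Set.Icc (u i) (u (i + 1))) :=
          Finset.sum_le_sum fun i _ => by
            rw [edist_comm]; exact edist_pi_le f π hπ γ (hu (Nat.le_succ i))
      _ ≤ eVariationOn (fun v => f (γ v)) (Set.Icc (u 0) (u n)) := chain _ u hu n
      _ ≤ eVariationOn (fun v => f (γ v)) Set.univ := eVariationOn.mono _ (Set.subset_univ _)

lemma rightVar {Z : Type*} [PseudoEMetricSpace Z] {F : unitInterval → Z} (hF : Continuous F)
    (hfin : eVariationOn F Set.univ ≠ ⊤) (t₀ : unitInterval) {ε : ℝ≥0∞} (hε : 0 < ε) :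
    ∃ δ > (0 : ℝ), ∀ s : unitInterval, t₀ ≤ s → (s : ℝ) - (t₀ : ℝ) < δ →
      eVariationOn F (Set.Icc t₀ s) < ε := by
  by_contra hcon
  push_neg at hcon
  have H : ∀ c : unitInterval, t₀ < c → ε ≤ eVariationOn F (Set.Icc t₀ c) := by
    intro c hc
    obtain ⟨s, hts, hsd, hεs⟩ := hcon ((c : ℝ) - (t₀ : ℝ)) (sub_pos.2 (Subtype.coe_lt_coe.2 hc))
    have hsc : s ≤ c := Subtype.coe_le_coe.1 (by linarith)
    exact hεs.trans (eVariationOn.mono _ (Set.Icc_subset_Icc_right hsc))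
  have ht1 : (t₀ : ℝ) < 1 := by
    rcases lt_or_eq_of_le t₀.2.2 with h | h
    · exact h
    · exfalso
      obtain ⟨s, hts, -, hεs⟩ := hcon 1 one_pos
      have hs : s = t₀ := le_antisymm (Subtype.coe_le_coe.1 (h ▸ s.2.2)) hts
      rw [hs] at hεs
      have h0 : eVariationOn F (Set.Icc t₀ t₀) = 0 := by
        rw [Set.Icc_self]
        exact eVariationOn.subsingleton _ Set.subsingleton_singleton
      rw [h0] at hεs
      exact absurd (lt_of_lt_of_le hε hεs) (lt_irrefl 0)
  obtain ⟨d, hd0, hdε⟩ := exists_between hε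
  set e : ℝ≥0∞ := d / 2 with he
  have he0 : e ≠ 0 := by
    simp only [he, ne_eq, ENNReal.div_eq_zero_iff]
    push_neg
    exact ⟨hd0.ne', ENNReal.ofNat_ne_top⟩
  have hee : e + e = d := ENNReal.add_halves d
  have hc := hF.tendsto t₀
  rw [EMetric.tendsto_nhds] at hc
  obtain ⟨δ, hδ0, hδ⟩ := Metric.eventually_nhds_iff.mp (hc e (pos_iff_ne_zero.2 he0))
  have hc₁mem : min 1 ((t₀ : ℝ) + δ / 2) ∈ Set.Icc (0 : ℝ) 1 :=
    ⟨le_min zero_le_one (by have := t₀.2.1; linarith), min_le_left _ _⟩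
  set c₁ : unitInterval := ⟨min 1 ((t₀ : ℝ) + δ / 2), hc₁mem⟩ with hc₁
  have ht₀c₁ : t₀ < c₁ := Subtype.coe_lt_coe.1 (lt_min ht1 (by linarith))
  have hnear : ∀ s : unitInterval, s ∈ Set.Icc t₀ c₁ → edist (F s) (F t₀) < e := by
    intro s hs
    apply hδ
    rw [Subtype.dist_eq, Real.dist_eq]
    have h1 : (t₀ : ℝ) ≤ s := Subtype.coe_le_coe.2 hs.1
    have h2 : (s : ℝ) ≤ c₁ := Subtype.coe_le_coe.2 hs.2
    have h3 : (c₁ : ℝ) ≤ (t₀ : ℝ) + δ / 2 := min_le_right _ _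
    rw [abs_of_nonneg (by linarith)]
    linarith
  set V₁ : ℝ≥0∞ := eVariationOn F (Set.Icc t₀ c₁) with hV₁
  have hV₁ε : ε ≤ V₁ := H c₁ ht₀c₁
  have hV₁top : V₁ ≠ ⊤ := ne_top_of_le_ne_top hfin (eVariationOn.mono _ (Set.subset_univ _))
  have hlt : V₁ - e < V₁ := ENNReal.sub_lt_self hV₁top (hε.trans_le hV₁ε).ne' he0
  have hlt' : V₁ - e < ⨆ p : ℕ × { u : ℕ → unitInterval // Monotone u ∧
      ∀ i, u i ∈ Set.Icc t₀ c₁ },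
      ∑ i ∈ Finset.range p.1, edist (F (p.2.1 (i + 1))) (F (p.2.1 i)) := hlt
  obtain ⟨⟨n, u, hu, hus⟩, hS⟩ := lt_iSup_iff.mp hlt'
  by_cases hcase : ∀ i, i ≤ n → ¬ t₀ < u i
  · have hz : ∑ i ∈ Finset.range n, edist (F (u (i + 1))) (F (u i)) = 0 := by
      apply Finset.sum_eq_zero
      intro i hi
      rw [Finset.mem_range] at hi
      have h1 : u i = t₀ := le_antisymm (not_lt.1 (hcase i (by omega))) (hus i).1
      have h2 : u (i + 1) = t₀ := le_antisymm (not_lt.1 (hcase (i + 1) (by omega))) (hus (i + 1)).1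
      rw [h1, h2, edist_self]
    rw [hz] at hS
    exact absurd hS (not_lt.2 zero_le)
  · push_neg at hcase
    obtain ⟨i₀, hi₀n, hi₀⟩ := hcase
    have hex : ∃ i, t₀ < u i := ⟨i₀, hi₀⟩
    classical
    set j := Nat.find hex with hjdef
    have hj : t₀ < u j := Nat.find_spec hex
    have hjn : j ≤ n := le_trans (Nat.find_le hi₀) hi₀n
    have hjlt : ∀ i, i < j → u i = t₀ := fun i hi =>
      le_antisymm (not_lt.1 (Nat.find_min hex hi)) (hus i).1
    have hsplit : ∑ i ∈ Finset.range n, edist (F (u (i + 1))) (F (u i))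
        = (∑ i ∈ Finset.range j, edist (F (u (i + 1))) (F (u i)))
          + ∑ i ∈ Finset.Ico j n, edist (F (u (i + 1))) (F (u i)) :=
      (Finset.sum_range_add_sum_Ico _ hjn).symm
    have h1 : ∑ i ∈ Finset.range j, edist (F (u (i + 1))) (F (u i)) ≤ e := by
      rcases Nat.eq_zero_or_pos j with hj0 | hj0
      · simp [hj0]
      · have hkey : ∑ i ∈ Finset.range j, edist (F (u (i + 1))) (F (u i))
            = edist (F (u (j - 1 + 1))) (F (u (j - 1))) := by
          apply Finset.sum_eq_single
          · intro i hi hine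
            rw [Finset.mem_range] at hi
            have hi1 : i + 1 < j := by omega
            rw [hjlt _ hi, hjlt _ hi1, edist_self]
          · intro h
            exact absurd (Finset.mem_range.2 (by omega)) h
        have hj1 : j - 1 + 1 = j := by omega
        rw [hkey, hj1, hjlt (j - 1) (by omega)]
        exact (hnear (u j) (hus j)).le
    have h2 : ∑ i ∈ Finset.Ico j n, edist (F (u (i + 1))) (F (u i))
        ≤ eVariationOn F (Set.Icc (u j) c₁) := by
      rw [Finset.sum_Ico_eq_sum_range]
      exact eVariationOn.sum_le (f := F) (n := n - j) (u := fun i => u (j + i))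
        (fun a b hab => hu (by omega))
        (fun i => ⟨hu (Nat.le_add_right j i), (hus (j + i)).2⟩)
    have h3 : eVariationOn F (Set.Icc (u j) c₁) + ε ≤ V₁ := by
      have hadd := eVariationOn.Icc_add_Icc F (s := Set.univ) (hus j).1 (hus j).2
        (Set.mem_univ (u j))
      simp only [Set.univ_inter] at hadd
      calc eVariationOn F (Set.Icc (u j) c₁) + ε
          ≤ eVariationOn F (Set.Icc (u j) c₁) + eVariationOn F (Set.Icc t₀ (u j)) :=
            add_le_add_right (H (u j) hj) _
        _ = V₁ := by rw [add_comm]; exact hadd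
    have hAfin : eVariationOn F (Set.Icc (u j) c₁) ≠ ⊤ :=
      ne_top_of_le_ne_top hV₁top ((le_add_right le_rfl).trans h3)
    have hSA : V₁ - e < e + eVariationOn F (Set.Icc (u j) c₁) := by
      rw [hsplit] at hS
      exact hS.trans_le (add_le_add h1 h2)
    have heV : e ≤ V₁ := le_trans (le_trans (ENNReal.half_le_self) hdε.le) hV₁ε
    have hV₁le : V₁ ≤ eVariationOn F (Set.Icc (u j) c₁) + d := by
      calc V₁ = V₁ - e + e := (tsub_add_cancel_of_le heV).symm
        _ ≤ (e + eVariationOn F (Set.Icc (u j) c₁)) + e := add_le_add_left hSA.le e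
        _ = eVariationOn F (Set.Icc (u j) c₁) + d := by
            rw [add_comm e, add_assoc, hee]
    have hεd : ε ≤ d := by
      have hh : eVariationOn F (Set.Icc (u j) c₁) + ε
          ≤ eVariationOn F (Set.Icc (u j) c₁) + d := h3.trans hV₁le
      calc ε = eVariationOn F (Set.Icc (u j) c₁) + ε - eVariationOn F (Set.Icc (u j) c₁) := by
            rw [ENNReal.add_sub_cancel_left hAfin]
        _ ≤ eVariationOn F (Set.Icc (u j) c₁) + d - eVariationOn F (Set.Icc (u j) c₁) :=
            tsub_le_tsub_right hh _
        _ = d := ENNReal.add_sub_cancel_left hAfin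
    exact absurd hεd (not_le.2 hdε)

lemma symm_le_symm {a b : unitInterval} (h : a ≤ b) :
    unitInterval.symm b ≤ unitInterval.symm a := by
  rw [← Subtype.coe_le_coe, unitInterval.coe_symm_eq, unitInterval.coe_symm_eq]
  have := Subtype.coe_le_coe.2 h
  linarith

lemma symm_image_Icc (a b : unitInterval) :
    unitInterval.symm '' Set.Icc a b
      = Set.Icc (unitInterval.symm b) (unitInterval.symm a) := by
  ext z
  constructor
  · rintro ⟨w, ⟨hw1, hw2⟩, rfl⟩
    exact ⟨symm_le_symm hw2, symm_le_symm hw1⟩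
  · rintro ⟨h1, h2⟩
    refine ⟨unitInterval.symm z, ⟨?_, ?_⟩, unitInterval.symm_symm z⟩
    · have := symm_le_symm h2
      rwa [unitInterval.symm_symm] at this
    · have := symm_le_symm h1
      rwa [unitInterval.symm_symm] at this

lemma leftVar {Z : Type*} [PseudoEMetricSpace Z] {F : unitInterval → Z} (hF : Continuous F)
    (hfin : eVariationOn F Set.univ ≠ ⊤) (t₀ : unitInterval) {ε : ℝ≥0∞} (hε : 0 < ε) :
    ∃ δ > (0 : ℝ), ∀ s : unitInterval, s ≤ t₀ → (t₀ : ℝ) - (s : ℝ) < δ →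
      eVariationOn F (Set.Icc s t₀) < ε := by
  have hσanti : ∀ s : Set unitInterval, AntitoneOn unitInterval.symm s :=
    fun s a _ b _ hab => symm_le_symm hab
  have himg : ∀ s : Set unitInterval,
      eVariationOn (F ∘ unitInterval.symm) s = eVariationOn F (unitInterval.symm '' s) :=
    fun s => eVariationOn.comp_eq_of_antitoneOn F _ (hσanti s)
  have hrange : unitInterval.symm '' Set.univ = Set.univ := by
    rw [Set.image_univ]
    exact (unitInterval.symm_involutive.surjective).range_eq
  have hfin' : eVariationOn (F ∘ unitInterval.symm) Set.univ ≠ ⊤ := by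
    rw [himg, hrange]; exact hfin
  obtain ⟨δ, hδ0, hδ⟩ := rightVar (hF.comp unitInterval.continuous_symm) hfin'
    (unitInterval.symm t₀) hε
  refine ⟨δ, hδ0, fun s hs hsd => ?_⟩
  have h1 : unitInterval.symm t₀ ≤ unitInterval.symm s := symm_le_symm hs
  have h2 : ((unitInterval.symm s : unitInterval) : ℝ) - ((unitInterval.symm t₀ : unitInterval) : ℝ) < δ := by
    rw [unitInterval.coe_symm_eq, unitInterval.coe_symm_eq]
    linarith
  have h3 := hδ (unitInterval.symm s) h1 h2
  rw [himg, symm_image_Icc, unitInterval.symm_symm, unitInterval.symm_symm] at h3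
  exact h3

lemma contOf {F : unitInterval → Y} {P : unitInterval → W}
    (hF : Continuous F) (hfin : eVariationOn F Set.univ ≠ ⊤)
    (hP : ∀ s t : unitInterval, s ≤ t → edist (P s) (P t) ≤ eVariationOn F (Set.Icc s t)) :
    Continuous P := by
  rw [Metric.continuous_iff]
  intro t₀ ε hε
  obtain ⟨δ₁, hδ₁0, hδ₁⟩ := rightVar hF hfin t₀ (ENNReal.ofReal_pos.2 hε)
  obtain ⟨δ₂, hδ₂0, hδ₂⟩ := leftVar hF hfin t₀ (ENNReal.ofReal_pos.2 hε)
  refine ⟨min δ₁ δ₂, lt_min hδ₁0 hδ₂0, fun s hs => ?_⟩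
  rw [Subtype.dist_eq, Real.dist_eq] at hs
  rw [← edist_lt_ofReal]
  rcases le_total t₀ s with h | h
  · have hd : (s : ℝ) - (t₀ : ℝ) < δ₁ := by
      have hle : (t₀ : ℝ) ≤ s := Subtype.coe_le_coe.2 h
      have := lt_of_lt_of_le hs (min_le_left δ₁ δ₂)
      rw [abs_of_nonneg (by linarith)] at this
      exact this
    calc edist (P s) (P t₀) = edist (P t₀) (P s) := edist_comm _ _
      _ ≤ eVariationOn F (Set.Icc t₀ s) := hP t₀ s h
      _ < ENNReal.ofReal ε := hδ₁ s h hd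
  · have hd : (t₀ : ℝ) - (s : ℝ) < δ₂ := by
      have hle : (s : ℝ) ≤ t₀ := Subtype.coe_le_coe.2 h
      have := lt_of_lt_of_le hs (min_le_right δ₁ δ₂)
      rw [abs_of_nonpos (by linarith), neg_sub] at this
      exact this
    calc edist (P s) (P t₀) ≤ eVariationOn F (Set.Icc s t₀) := hP s t₀ h
      _ < ENNReal.ofReal ε := hδ₂ s h hd

end LPPAux

/-- lengths of curves are preserved by the projection
`π̂_f : X → ⟨X⟩_f`. -/
theorem lengthPd_projection_preserves_length {X Y W : Type*} [TopologicalSpace X]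
    [MetricSpace Y] [MetricSpace W] (f : X → Y) (hf : Continuous f)
    (hlc : LengthConnected f) (π : X → W) (hsurj : Function.Surjective π)
    (hπ : ∀ x z : X, edist (π x) (π z) = lengthPd f x z)
    (γ : C(unitInterval, X)) :
    (curveELength (fun t => f (γ t)) ≠ ⊤ →
      Continuous (fun t => π (γ t)) ∧
      curveELength (fun t => f (γ t)) = curveELength (fun t => π (γ t))) ∧
    ((Continuous (fun t => π (γ t)) ∧ curveELength (fun t => π (γ t)) ≠ ⊤) →
      curveELength (fun t => f (γ t)) ≠ ⊤ ∧
      curveELength (fun t => f (γ t)) = curveELength (fun t => π (γ t))) := by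
  have heq : curveELength (fun t => f (γ t)) = curveELength (fun t => π (γ t)) :=
    LPPAux.lengths_eq f π hπ γ
  constructor
  · intro hfin
    refine ⟨?_, heq⟩
    exact LPPAux.contOf (hf.comp γ.continuous) hfin
      (fun s t hst => LPPAux.edist_pi_le f π hπ γ hst)
  · rintro ⟨-, hfin⟩
    refine ⟨?_, heq⟩
    rw [heq]; exact hfin
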